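/- Fix integers K, N, a, b with m = a*N − b*K > 0. The map sending σ to the pair (𝓛(σ), σ restricted to Δ(σ)) is a bijection from DPT(K,N,a,b) onto Ω(K,N,a,b), the set of pairs (𝓛, τ) where 𝓛 is a (K,N)-periodic lattice path with 𝓛 < 𝓛[a,b] and τ is a standard filling of Δ(𝓛) by the numbers 1,…,m whose (K,N)-periodic extension to Δ'(𝓛) is standard. -/

import Mathlib

/-- A standard doubly periodic tableau with respect to `(K, N, a, b)`. -/
def IsDPT (K N a b : ℤ) (σ : ℤ × ℤ → ℤ) : Prop :=
  Function.Surjective σ ∧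
  (∀ x y : ℤ, σ (x + K, y - N) = σ (x, y)) ∧
  (∀ x y : ℤ, σ (x + a, y - b) = σ (x, y) + (a * N - b * K)) ∧
  (∀ x y : ℤ, σ (x, y) < σ (x + 1, y)) ∧
  (∀ x y : ℤ, σ (x, y) < σ (x, y + 1))

/-- A `(K,N)`-periodic lattice path. -/
def IsLP (K N : ℤ) (L : ℤ → ℤ) : Prop :=
  Antitone L ∧ ∀ y : ℤ, L (y + N) = L y - K

/-- The shifted path `L[a,b] : y ↦ L(y+b) + a`. -/
def LPshift (a b : ℤ) (L : ℤ → ℤ) : ℤ → ℤ := fun y => L (y + b) + a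

/-- The extended fundamental domain `Δ'(L)`. -/
def DeltaP (a b : ℤ) (L : ℤ → ℤ) : Set (ℤ × ℤ) :=
  {p : ℤ × ℤ | L p.2 ≤ p.1 ∧ p.1 < LPshift a b L p.2}

/-- The fundamental domain `Δ(L) = {(x,y) ∈ Δ'(L) : 0 ≤ y < N}`. -/
def Delta (N a b : ℤ) (L : ℤ → ℤ) : Set (ℤ × ℤ) :=
  {p : ℤ × ℤ | p ∈ DeltaP a b L ∧ 0 ≤ p.2 ∧ p.2 < N}

/-- A standard filling of `Δ(L)` by the numbers `1, …, m`. -/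
def IsStdFilling (K N a b : ℤ) (L : ℤ → ℤ) (τ : ℤ × ℤ → ℤ) : Prop :=
  Set.BijOn τ (Delta N a b L) (Set.Icc 1 (a * N - b * K)) ∧
  (∀ x y : ℤ, (x, y) ∈ Delta N a b L → (x + 1, y) ∈ Delta N a b L →
    τ (x, y) < τ (x + 1, y)) ∧
  (∀ x y : ℤ, (x, y) ∈ Delta N a b L → (x, y + 1) ∈ Delta N a b L →
    τ (x, y) < τ (x, y + 1))

/-- Standardness of the `(K,N)`-periodic extension of a filling of `Δ` to `Δ'`. -/
def ExtStandard (K N : ℤ) (Δ : Set (ℤ × ℤ)) (τ : ℤ × ℤ → ℤ) : Prop :=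
  ∀ x y x' y' s s' : ℤ, (x, y) ∈ Δ → (x', y') ∈ Δ →
    ((x + s * K + 1 = x' + s' * K ∧ y - s * N = y' - s' * N) → τ (x, y) < τ (x', y')) ∧
    ((x + s * K = x' + s' * K ∧ y - s * N + 1 = y' - s' * N) → τ (x, y) < τ (x', y'))

/-- Membership in `Ω(K,N,a,b)`: pairs `(L, τ)` with `L` a `(K,N)`-periodic lattice
path satisfying `L < L[a,b]` and `τ` a standard filling of `Δ(L)` by `1,…,m` whose
periodic extension to `Δ'(L)` is standard (normalized to be `0` outside `Δ(L)`). -/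
def OmegaCond (K N a b : ℤ) (L : ℤ → ℤ) (τ : ℤ × ℤ → ℤ) : Prop :=
  IsLP K N L ∧ (∀ y : ℤ, L y ≤ LPshift a b L y) ∧ L ≠ LPshift a b L ∧
  IsStdFilling K N a b L τ ∧ ExtStandard K N (Delta N a b L) τ ∧
  ∀ p : ℤ × ℤ, p ∉ Delta N a b L → τ p = 0

section Proof
variable {K N a b : ℤ} {σ : ℤ × ℤ → ℤ} {L : ℤ → ℤ} {τ : ℤ × ℤ → ℤ}

lemma sm_add_le {f : ℤ → ℤ} (hf : StrictMono f) (x : ℤ) :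
    ∀ d : ℤ, 0 ≤ d → f x + d ≤ f (x + d) := by
  refine Int.le_induction ?_ ?_
  · simp
  · intro n hn ih
    have h1 := hf (show x + n < x + (n + 1) by omega)
    omega

lemma sm_exists_ge {f : ℤ → ℤ} (hf : StrictMono f) (C : ℤ) : ∃ x, C ≤ f x := by
  rcases le_or_gt C (f 0) with h | h
  · exact ⟨0, h⟩
  · refine ⟨0 + (C - f 0), ?_⟩
    have := sm_add_le hf 0 (C - f 0) (by omega)
    omega

lemma sm_exists_lt {f : ℤ → ℤ} (hf : StrictMono f) (C : ℤ) : ∃ x, f x < C := by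
  refine ⟨C - f 0 - |C - f 0| - 1, ?_⟩
  have := sm_add_le hf (C - f 0 - |C - f 0| - 1) (f 0 - C + |C - f 0| + 1)
    (by have := abs_nonneg (C - f 0); have := le_abs_self (C - f 0); omega)
  have e : C - f 0 - |C - f 0| - 1 + (f 0 - C + |C - f 0| + 1) = 0 := by ring
  rw [e] at this
  have := abs_nonneg (C - f 0)
  omega



lemma monoX (h : IsDPT K N a b σ) (y : ℤ) : StrictMono (fun x => σ (x, y)) :=
  strictMono_int_of_lt_succ (fun x => h.2.2.2.1 x y)

lemma monoY (h : IsDPT K N a b σ) (x : ℤ) : StrictMono (fun y => σ (x, y)) :=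
  strictMono_int_of_lt_succ (fun y => h.2.2.2.2 x y)

lemma mono2 (h : IsDPT K N a b σ) {x x' y y' : ℤ} (hx : x ≤ x') (hy : y ≤ y') :
    σ (x, y) ≤ σ (x', y') :=
  ((monoX h y).monotone hx).trans ((monoY h x').monotone hy)

lemma perA (h : IsDPT K N a b σ) (s x y : ℤ) : σ (x + s * K, y - s * N) = σ (x, y) := by
  induction s using Int.induction_on with
  | zero => simp
  | succ s ih =>
      have := h.2.1 (x + s * K) (y - s * N)
      calc σ (x + (s+1) * K, y - (s+1) * N)
          = σ ((x + s * K) + K, (y - s * N) - N) := by ring_nf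
        _ = σ (x + s * K, y - s * N) := this
        _ = σ (x, y) := ih
  | pred s ih =>
      have := h.2.1 (x + (-s-1) * K) (y - (-s-1) * N)
      have h2 : σ (x + (-s) * K, y - (-s) * N) = σ (x + (-s-1) * K, y - (-s-1) * N) := by
        rw [← this]; ring_nf
      rw [← ih, h2]

lemma perB (h : IsDPT K N a b σ) (t x y : ℤ) :
    σ (x + t * a, y - t * b) = σ (x, y) + t * (a * N - b * K) := by
  induction t using Int.induction_on with
  | zero => simp
  | succ t ih =>
      have := h.2.2.1 (x + t * a) (y - t * b)
      calc σ (x + (t+1) * a, y - (t+1) * b)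
          = σ ((x + t * a) + a, (y - t * b) - b) := by ring_nf
        _ = σ (x + t * a, y - t * b) + (a * N - b * K) := this
        _ = σ (x, y) + (t+1) * (a * N - b * K) := by rw [ih]; ring
  | pred t ih =>
      have := h.2.2.1 (x + (-t-1) * a) (y - (-t-1) * b)
      have h2 : σ (x + (-t) * a, y - (-t) * b)
          = σ (x + (-t-1) * a, y - (-t-1) * b) + (a * N - b * K) := by
        rw [← this]; ring_nf
      rw [ih] at h2
      linarith [h2]



open Classical in
noncomputable def dptPath (σ : ℤ × ℤ → ℤ) : ℤ → ℤ := fun y =>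
  if h : ∃ lb : ℤ, 1 ≤ σ (lb, y) ∧ ∀ z : ℤ, 1 ≤ σ (z, y) → lb ≤ z then h.choose else 0

lemma dptPath_spec (h : IsDPT K N a b σ) (y : ℤ) :
    1 ≤ σ (dptPath σ y, y) ∧ ∀ z : ℤ, 1 ≤ σ (z, y) → dptPath σ y ≤ z := by
  have hex : ∃ lb : ℤ, 1 ≤ σ (lb, y) ∧ ∀ z : ℤ, 1 ≤ σ (z, y) → lb ≤ z := by
    obtain ⟨x0, hx0⟩ := sm_exists_lt (monoX h y) 1
    obtain ⟨x1, hx1⟩ := sm_exists_ge (monoX h y) 1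
    refine Int.exists_least_of_bdd ⟨x0, fun z hz => ?_⟩ ⟨x1, hx1⟩
    by_contra hc
    exact absurd (((monoX h y).monotone (by omega : z ≤ x0)).trans_lt hx0) (by omega)
  rw [dptPath]
  rw [dif_pos hex]
  exact hex.choose_spec

lemma one_le_iff (h : IsDPT K N a b σ) (x y : ℤ) :
    1 ≤ σ (x, y) ↔ dptPath σ y ≤ x := by
  constructor
  · exact fun hx => (dptPath_spec h y).2 x hx
  · intro hx
    exact (dptPath_spec h y).1.trans ((monoX h y).monotone hx)

lemma m_one_le_iff (h : IsDPT K N a b σ) (hm : 0 < a * N - b * K) (x y : ℤ) :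
    (a * N - b * K) + 1 ≤ σ (x, y) ↔ dptPath σ (y + b) + a ≤ x := by
  have hB := perB h 1 (x - a) (y + b)
  simp only [one_mul] at hB
  have e1 : x - a + a = x := by ring
  have e2 : y + b - b = y := by ring
  rw [e1, e2] at hB
  have : (a * N - b * K) + 1 ≤ σ (x, y) ↔ 1 ≤ σ (x - a, y + b) := by omega
  rw [this, one_le_iff h]
  omega


-- characterization of DeltaP
lemma deltaP_iff (h : IsDPT K N a b σ) (hm : 0 < a * N - b * K) (p : ℤ × ℤ) :
    p ∈ DeltaP a b (dptPath σ) ↔ 1 ≤ σ p ∧ σ p ≤ a * N - b * K := by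
  obtain ⟨x, y⟩ := p
  simp only [DeltaP, LPshift, Set.mem_setOf_eq]
  rw [← one_le_iff h x y]
  have := m_one_le_iff h hm x y
  omega

lemma dptPath_isLP (h : IsDPT K N a b σ) : IsLP K N (dptPath σ) := by
  constructor
  · intro y y' hyy
    have h1 : 1 ≤ σ (dptPath σ y, y') :=
      (dptPath_spec h y).1.trans (mono2 h le_rfl hyy)
    exact (one_le_iff h _ _).1 h1
  · intro y
    have key : ∀ x : ℤ, σ (x, y + N) = σ (x + K, y) := by
      intro x
      have := perA h 1 x (y + N)
      simp only [one_mul] at this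
      have e : y + N - N = y := by ring
      rw [e] at this
      exact this.symm
    have h1 : 1 ≤ σ (dptPath σ y - K, y + N) := by
      rw [key]
      have e : dptPath σ y - K + K = dptPath σ y := by ring
      rw [e]; exact (dptPath_spec h y).1
    have h2 : ∀ z : ℤ, 1 ≤ σ (z, y + N) → dptPath σ y - K ≤ z := by
      intro z hz
      rw [key] at hz
      have := (dptPath_spec h y).2 _ hz
      omega
    have := (dptPath_spec h (y + N)).2 _ h1
    have := h2 _ (dptPath_spec h (y + N)).1
    omega

lemma dptPath_le_shift (h : IsDPT K N a b σ) (hm : 0 < a * N - b * K) (y : ℤ) :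
    dptPath σ y ≤ LPshift a b (dptPath σ) y := by
  have h1 : (a * N - b * K) + 1 ≤ σ (dptPath σ (y + b) + a, y) :=
    (m_one_le_iff h hm _ y).2 le_rfl
  have h2 : 1 ≤ σ (dptPath σ (y + b) + a, y) := by omega
  exact (one_le_iff h _ y).1 h2

lemma dptPath_ne_shift (h : IsDPT K N a b σ) (hm : 0 < a * N - b * K) :
    dptPath σ ≠ LPshift a b (dptPath σ) := by
  obtain ⟨⟨x, y⟩, hxy⟩ := h.1 1
  intro hc
  have h1 : dptPath σ y ≤ x := (one_le_iff h x y).1 (by omega)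
  have h2 : ¬ ((a * N - b * K) + 1 ≤ σ (x, y)) := by omega
  rw [m_one_le_iff h hm x y] at h2
  have := congrFun hc y
  simp only [LPshift] at this
  omega

lemma perL (h : IsLP K N L) (s z : ℤ) : L (z + s * N) = L z - s * K := by
  induction s using Int.induction_on with
  | zero => simp
  | succ s ih =>
      have := h.2 (z + s * N)
      have e : z + s * N + N = z + (s + 1) * N := by ring
      rw [e] at this
      have e2 : (s + 1 : ℤ) * K = s * K + K := by ring
      omega
  | pred s ih =>
      have := h.2 (z + (-s - 1) * N)
      have e : z + (-s - 1) * N + N = z + (-s) * N := by ring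
      rw [e] at this
      have e2 : (-(s:ℤ)) * K = (-s - 1) * K + K := by ring
      omega

/-- fundamental domain as a Finset -/
noncomputable def deltaFinset (N a b : ℤ) (L : ℤ → ℤ) : Finset (ℤ × ℤ) :=
  (Finset.range N.toNat).biUnion fun i =>
    (Finset.Ico (L i) (L ((i : ℤ) + b) + a)).image fun x => (x, (i : ℤ))

lemma mem_deltaFinset (p : ℤ × ℤ) :
    p ∈ deltaFinset N a b L ↔ p ∈ Delta N a b L := by
  obtain ⟨x, y⟩ := p
  simp only [deltaFinset, Finset.mem_biUnion, Finset.mem_image, Finset.mem_range,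
    Finset.mem_Ico, Delta, DeltaP, LPshift, Set.mem_setOf_eq, Prod.mk.injEq]
  constructor
  · rintro ⟨i, hi, x', ⟨hx1, hx2⟩, rfl, rfl⟩
    refine ⟨⟨hx1, hx2⟩, by positivity, ?_⟩
    exact_mod_cast Int.lt_toNat.mp hi
  · rintro ⟨⟨h1, h2⟩, hy0, hyN⟩
    refine ⟨y.toNat, ?_, x, ?_, ?_, ?_⟩
    · omega
    · rw [Int.toNat_of_nonneg hy0]; exact ⟨h1, h2⟩
    · rfl
    · exact Int.toNat_of_nonneg hy0

lemma sum_window (h : IsLP K N L) (hN : 0 < N) (c : ℤ) :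
    ∑ i ∈ Finset.range N.toNat, L (c + i) =
      (∑ i ∈ Finset.range N.toNat, L ((0:ℤ) + i)) - c * K := by
  induction c using Int.induction_on with
  | zero => simp
  | succ c ih =>
      have step : ∑ i ∈ Finset.range N.toNat, L ((c + 1) + i)
          = (∑ i ∈ Finset.range N.toNat, L (c + i)) + L (c + N) - L c := by
        have h1 := Finset.sum_range_succ' (fun i => L (c + i)) N.toNat
        have h2 := Finset.sum_range_succ (fun i => L (c + i)) N.toNat
        have e3 : ∀ i : ℕ, L (c + ((i : ℤ) + 1)) = L ((c + 1) + i) := by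
          intro i; ring_nf
        push_cast at h1
        simp only [e3] at h1
        have e4 : L (c + (N.toNat : ℤ)) = L (c + N) := by
          rw [Int.toNat_of_nonneg hN.le]
        rw [e4] at h2
        have e5 : L (c + (0:ℤ)) = L c := by norm_num
        omega
      have hK : L (c + N) = L c - K := h.2 c
      rw [step, hK, ih]; ring
  | pred c ih =>
      have step : ∑ i ∈ Finset.range N.toNat, L ((-c - 1 + 1) + i)
          = (∑ i ∈ Finset.range N.toNat, L ((-c - 1) + i)) + L ((-c-1) + N) - L (-c-1) := by
        have h1 := Finset.sum_range_succ' (fun i => L ((-c-1) + i)) N.toNat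
        have h2 := Finset.sum_range_succ (fun i => L ((-c-1) + i)) N.toNat
        have e3 : ∀ i : ℕ, L ((-c-1) + ((i : ℤ) + 1)) = L ((-c-1+1) + i) := by
          intro i; ring_nf
        push_cast at h1
        simp only [e3] at h1
        have e4 : L ((-c-1) + (N.toNat : ℤ)) = L ((-c-1) + N) := by
          rw [Int.toNat_of_nonneg hN.le]
        rw [e4] at h2
        have e5 : L ((-c-1) + (0:ℤ)) = L (-c-1) := by norm_num
        omega
      have hK : L ((-c-1) + N) = L (-c-1) - K := h.2 _
      have e6 : (-c - 1 + 1 : ℤ) = -c := by ring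
      rw [e6] at step
      rw [ih] at step
      have : ∑ i ∈ Finset.range N.toNat, L ((-c-1) + i)
          = (∑ i ∈ Finset.range N.toNat, L ((0:ℤ) + i)) - (-c) * K - L ((-c-1)+N) + L (-c-1) := by
        omega
      rw [this, hK]; ring


lemma card_deltaFinset (h : IsLP K N L) (hN : 0 < N)
    (hle : ∀ y, L y ≤ LPshift a b L y) :
    ((deltaFinset N a b L).card : ℤ) = a * N - b * K := by
  have hdisj : ∀ i ∈ Finset.range N.toNat, ∀ j ∈ Finset.range N.toNat, i ≠ j →
      Disjoint ((Finset.Ico (L i) (L ((i : ℤ) + b) + a)).image fun x => (x, (i : ℤ)))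
        ((Finset.Ico (L j) (L ((j : ℤ) + b) + a)).image fun x => (x, (j : ℤ))) := by
    intro i _ j _ hij
    simp only [Finset.disjoint_left, Finset.mem_image]
    rintro p ⟨x, _, rfl⟩ ⟨x', _, hx'⟩
    have : (j : ℤ) = i := congrArg Prod.snd hx'
    exact hij (by exact_mod_cast this.symm)
  rw [deltaFinset, Finset.card_biUnion hdisj]
  have hcard : ∀ i : ℕ, ((Finset.Ico (L i) (L ((i : ℤ) + b) + a)).image
      fun x => (x, (i : ℤ))).card = (Finset.Ico (L i) (L ((i : ℤ) + b) + a)).card := by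
    intro i
    apply Finset.card_image_of_injective
    intro u v huv
    exact congrArg Prod.fst huv
  push_cast
  calc (∑ i ∈ Finset.range N.toNat, (((Finset.Ico (L i) (L ((i : ℤ) + b) + a)).image
          fun x => (x, (i : ℤ))).card : ℤ))
      = ∑ i ∈ Finset.range N.toNat, (L ((i : ℤ) + b) + a - L i) := by
        apply Finset.sum_congr rfl
        intro i _
        rw [hcard i, Int.card_Ico]
        have hab : L (i:ℤ) ≤ L ((i:ℤ) + b) + a := by simpa [LPshift] using hle (i:ℤ)
        omega
    _ = (∑ i ∈ Finset.range N.toNat, L ((b : ℤ) + i)) + N.toNat * a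
        - ∑ i ∈ Finset.range N.toNat, L ((0 : ℤ) + i) := by
        have e1 : ∀ i : ℕ, L ((i:ℤ) + b) + a - L (i:ℤ)
            = (L (b + (i:ℤ)) + a) - L ((0:ℤ) + (i:ℤ)) := by
          intro i
          rw [add_comm (i:ℤ) b, zero_add]
        simp only [e1]
        rw [Finset.sum_sub_distrib, Finset.sum_add_distrib]
        simp only [Finset.sum_const, Finset.card_range, nsmul_eq_mul]
    _ = a * N - b * K := by
        rw [sum_window h hN b]
        have : ((N.toNat : ℤ)) = N := Int.toNat_of_nonneg hN.le
        rw [this]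
        ring


open Classical in
noncomputable def fwdTau (N a b : ℤ) (σ : ℤ × ℤ → ℤ) : ℤ × ℤ → ℤ := fun p =>
  if p ∈ Delta N a b (dptPath σ) then σ p else 0

lemma fwdTau_eq {p : ℤ × ℤ} (hp : p ∈ Delta N a b (dptPath σ)) :
    fwdTau N a b σ p = σ p := by
  rw [fwdTau, if_pos hp]

lemma fwdTau_zero {p : ℤ × ℤ} (hp : p ∉ Delta N a b (dptPath σ)) :
    fwdTau N a b σ p = 0 := by
  rw [fwdTau, if_neg hp]


open Classical in
lemma fwdTau_def (p : ℤ × ℤ) : fwdTau N a b σ p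
    = if p ∈ Delta N a b (dptPath σ) then σ p else 0 := by rw [fwdTau]

lemma delta_coe : (↑(deltaFinset N a b L) : Set (ℤ × ℤ)) = Delta N a b L :=
  Set.ext fun p => by rw [Finset.mem_coe, mem_deltaFinset]

lemma surj_aux (h : IsDPT K N a b σ) (hK : 0 < K) (hN : 0 < N) (hm : 0 < a * N - b * K)
    {v : ℤ} (hv : v ∈ Set.Icc 1 (a * N - b * K)) :
    ∃ p ∈ Delta N a b (dptPath σ), σ p = v := by
  obtain ⟨⟨x, y⟩, hxy⟩ := h.1 v
  refine ⟨(x + (y / N) * K, y - (y / N) * N), ?_, ?_⟩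
  · have hval : σ (x + (y / N) * K, y - (y / N) * N) = v := by rw [perA h]; exact hxy
    have hmod : y - (y / N) * N = y % N := by
      have := Int.mul_ediv_add_emod y N
      linarith
    simp only [Set.mem_Icc] at hv
    refine ⟨(deltaP_iff h hm _).2 (by rw [hval]; exact hv), ?_, ?_⟩
    · simp only [hmod]
      exact Int.emod_nonneg y (by omega)
    · simp only [hmod]
      exact Int.emod_lt_of_pos y hN
  · rw [perA h]; exact hxy

lemma fwd_injOn (h : IsDPT K N a b σ) (hK : 0 < K) (hN : 0 < N)
    (hm : 0 < a * N - b * K) : Set.InjOn σ (Delta N a b (dptPath σ)) := by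
  have hfin : (Delta N a b (dptPath σ)).Finite := by
    rw [← delta_coe]; exact (deltaFinset N a b (dptPath σ)).finite_toSet
  have hcard : (Delta N a b (dptPath σ)).ncard = (a * N - b * K).toNat := by
    rw [← delta_coe, Set.ncard_coe_finset]
    have := card_deltaFinset (dptPath_isLP h) hN (dptPath_le_shift h hm)
    omega
  have hicc : (Set.Icc (1:ℤ) (a * N - b * K)).ncard = (a * N - b * K).toNat := by
    rw [← Finset.coe_Icc, Set.ncard_coe_finset, Int.card_Icc]
    omega
  intro p hp q hq hpq
  refine Set.inj_on_of_surj_on_of_ncard_le (f := fun p _ => σ p)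
    (fun p hp => (deltaP_iff h hm p).1 hp.1) ?_ (le_of_eq (by rw [hcard, hicc])) hp hq hpq hfin
  intro v hv
  obtain ⟨p, hp, hval⟩ := surj_aux h hK hN hm hv
  exact ⟨p, hp, hval⟩

lemma fwd_omega (h : IsDPT K N a b σ) (hK : 0 < K) (hN : 0 < N)
    (hm : 0 < a * N - b * K) :
    OmegaCond K N a b (dptPath σ) (fwdTau N a b σ) := by
  have hDiff : Set.EqOn σ (fwdTau N a b σ) (Delta N a b (dptPath σ)) :=
    fun p hp => (fwdTau_eq hp).symm
  refine ⟨dptPath_isLP h, dptPath_le_shift h hm, dptPath_ne_shift h hm, ⟨?_, ?_, ?_⟩, ?_, ?_⟩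
  · -- BijOn
    refine Set.BijOn.congr ⟨?_, fwd_injOn h hK hN hm, ?_⟩ hDiff
    · intro p hp
      exact Set.mem_Icc.2 ((deltaP_iff h hm p).1 hp.1)
    · intro v hv
      obtain ⟨p, hp, hval⟩ := surj_aux h hK hN hm hv
      exact ⟨p, hp, hval⟩
  · intro x y h1 h2
    rw [fwdTau_eq h1, fwdTau_eq h2]
    exact h.2.2.2.1 x y
  · intro x y h1 h2
    rw [fwdTau_eq h1, fwdTau_eq h2]
    exact h.2.2.2.2 x y
  · -- ExtStandard
    intro x y x' y' s s' hp hq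
    constructor
    · rintro ⟨h1, h2⟩
      rw [fwdTau_eq hp, fwdTau_eq hq]
      have e1 : (s - s') * K = s * K - s' * K := by ring
      have e2 : (s - s') * N = s * N - s' * N := by ring
      have hx' : x' = (x + 1) + (s - s') * K := by omega
      have hy' : y' = y - (s - s') * N := by omega
      rw [hx', hy', perA h (s - s') (x + 1) y]
      exact h.2.2.2.1 x y
    · rintro ⟨h1, h2⟩
      rw [fwdTau_eq hp, fwdTau_eq hq]
      have e1 : (s - s') * K = s * K - s' * K := by ring
      have e2 : (s - s') * N = s * N - s' * N := by ring
      have hx' : x' = x + (s - s') * K := by omega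
      have hy' : y' = (y + 1) - (s - s') * N := by omega
      rw [hx', hy', perA h (s - s') x (y + 1)]
      exact h.2.2.2.2 x y
  · exact fun p hp => fwdTau_zero hp

lemma gmono (hle : ∀ y, L y ≤ LPshift a b L y) (y : ℤ) :
    Monotone (fun t : ℤ => L (y + t * b) + t * a) := by
  apply monotone_int_of_le_succ
  intro t
  have h := hle (y + t * b)
  simp only [LPshift] at h
  have e : y + t * b + b = y + (t + 1) * b := by ring
  rw [e] at h
  show L (y + t * b) + t * a ≤ L (y + (t + 1) * b) + (t + 1) * a
  linarith [h]

lemma glb (hLP : IsLP K N L) (hK : 0 < K) (hN : 0 < N) (y t : ℤ) :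
    t * (a * N - b * K) + N * (L y - K) ≤ N * (L (y + t * b) + t * a) := by
  set q := (t * b) / N with hq
  set r := (t * b) % N with hr
  have hid : N * q + r = t * b := Int.mul_ediv_add_emod (t * b) N
  have hr0 : 0 ≤ r := Int.emod_nonneg _ (by omega)
  have hrN : r < N := Int.emod_lt_of_pos _ hN
  have e : y + t * b = (y + r) + q * N := by
    have e2 : q * N = N * q := by ring
    omega
  rw [e, perL hLP q (y + r)]
  have hlow : L y - K ≤ L (y + r) := by
    have h1 : L (y + N) = L y - K := hLP.2 y
    have h2 : L (y + N) ≤ L (y + r) := hLP.1 (by omega)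
    omega
  nlinarith [mul_nonneg hN.le (sub_nonneg.2 hlow), mul_nonneg hK.le hr0]

lemma gub (hLP : IsLP K N L) (hK : 0 < K) (hN : 0 < N) (y t : ℤ) :
    N * (L (y + t * b) + t * a) ≤ t * (a * N - b * K) + N * (L y + K) := by
  set q := (t * b) / N with hq
  set r := (t * b) % N with hr
  have hid : N * q + r = t * b := Int.mul_ediv_add_emod (t * b) N
  have hr0 : 0 ≤ r := Int.emod_nonneg _ (by omega)
  have hrN : r < N := Int.emod_lt_of_pos _ hN
  have e : y + t * b = (y + r) + q * N := by
    have e2 : q * N = N * q := by ring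
    omega
  rw [e, perL hLP q (y + r)]
  have hup : L (y + r) ≤ L y := hLP.1 (by omega)
  nlinarith [mul_nonneg hN.le (sub_nonneg.2 hup), mul_nonneg hK.le (by omega : (0:ℤ) ≤ N - 1 - r)]

lemma ex_uniq_t (hLP : IsLP K N L) (hle : ∀ y, L y ≤ LPshift a b L y)
    (hK : 0 < K) (hN : 0 < N) (hm : 0 < a * N - b * K) (x y : ℤ) :
    ∃! t : ℤ, L (y + t * b) + t * a ≤ x ∧ x < L (y + (t + 1) * b) + (t + 1) * a := by
  have hginh : ∃ t : ℤ, L (y + t * b) + t * a ≤ x := by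
    set t0 := min 0 (N * x - N * (L y + K)) with ht0
    refine ⟨t0, ?_⟩
    have h1 : t0 ≤ 0 := min_le_left _ _
    have h2 : t0 ≤ N * x - N * (L y + K) := min_le_right _ _
    have h3 : t0 * (a * N - b * K) ≤ t0 := by
      have : 0 ≤ (-t0) * ((a * N - b * K) - 1) := mul_nonneg (by omega) (by omega)
      nlinarith
    have h4 := gub (a := a) (b := b) hLP hK hN y t0
    have h5 : N * (L (y + t0 * b) + t0 * a) ≤ N * x := by omega
    exact le_of_mul_le_mul_left h5 hN
  have hgbdd : ∀ t : ℤ, L (y + t * b) + t * a ≤ x → t ≤ max 0 (N * x - N * (L y - K)) := by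
    intro t ht
    rcases le_or_gt t 0 with h | h
    · exact h.trans (le_max_left _ _)
    · have h4 := glb (a := a) (b := b) hLP hK hN y t
      have h5 : N * (L (y + t * b) + t * a) ≤ N * x := by
        have := mul_le_mul_of_nonneg_left ht hN.le
        linarith
      have h6 : t * (a * N - b * K) ≤ N * x - N * (L y - K) := by omega
      have h7 : t ≤ t * (a * N - b * K) := le_mul_of_one_le_right h.le (by omega)
      have := le_max_right 0 (N * x - N * (L y - K))
      omega
  obtain ⟨t, ht, hmax⟩ := Int.exists_greatest_of_bdd ⟨_, hgbdd⟩ hginh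
  have hup : x < L (y + (t + 1) * b) + (t + 1) * a := by
    by_contra hc
    push_neg at hc
    have := hmax (t + 1) hc
    omega
  refine ⟨t, ⟨ht, hup⟩, ?_⟩
  intro t' ⟨h1', h2'⟩
  have hle' : t' ≤ t := hmax t' h1'
  by_contra hne
  have h8 : t' + 1 ≤ t := by omega
  have h9 := gmono hle y h8
  simp only at h9
  omega

open Classical in
noncomputable def sigmaOf (K N a b : ℤ) (L : ℤ → ℤ) (τ : ℤ × ℤ → ℤ) : ℤ × ℤ → ℤ := fun p =>
  if h : ∃! t : ℤ, L (p.2 + t * b) + t * a ≤ p.1 ∧ p.1 < L (p.2 + (t + 1) * b) + (t + 1) * a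
  then τ (p.1 - h.choose * a + ((p.2 + h.choose * b) / N) * K, (p.2 + h.choose * b) % N)
       + h.choose * (a * N - b * K)
  else 0

lemma sigmaOf_eq (hLP : IsLP K N L) (hle : ∀ y, L y ≤ LPshift a b L y)
    (hK : 0 < K) (hN : 0 < N) (hm : 0 < a * N - b * K) {x y t : ℤ}
    (hb : L (y + t * b) + t * a ≤ x ∧ x < L (y + (t + 1) * b) + (t + 1) * a) :
    sigmaOf K N a b L τ (x, y)
      = τ (x - t * a + ((y + t * b) / N) * K, (y + t * b) % N) + t * (a * N - b * K) := by
  have hex := ex_uniq_t hLP hle hK hN hm x y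
  rw [sigmaOf]
  rw [dif_pos hex]
  have ht : t = hex.choose := hex.choose_spec.2 t hb
  rw [← ht]

lemma cell_mem (hLP : IsLP K N L) (hN : 0 < N) {x y t : ℤ}
    (hb : L (y + t * b) + t * a ≤ x ∧ x < L (y + (t + 1) * b) + (t + 1) * a) :
    (x - t * a + ((y + t * b) / N) * K, (y + t * b) % N) ∈ Delta N a b L := by
  set q := (y + t * b) / N with hq
  set r := (y + t * b) % N with hr
  have hid : N * q + r = y + t * b := Int.mul_ediv_add_emod _ N
  have hr0 : 0 ≤ r := Int.emod_nonneg _ (by omega)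
  have hrN : r < N := Int.emod_lt_of_pos _ hN
  have hLr : L r = L (y + t * b) + q * K := by
    have e : y + t * b = r + q * N := by
      have e2 : q * N = N * q := by ring
      omega
    rw [e, perL hLP q r]
    ring
  have hLrb : L (r + b) = L (y + (t + 1) * b) + q * K := by
    have e : r + b = (y + (t + 1) * b) + (-q) * N := by
      have e2 : (-q) * N = -(N * q) := by ring
      have e3 : (t + 1) * b = t * b + b := by ring
      omega
    rw [e, perL hLP (-q) _]
    ring
  refine ⟨⟨?_, ?_⟩, hr0, hrN⟩
  · simp only [hLr]
    omega
  · simp only [LPshift, hLrb]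
    have e4 : (t + 1) * a = t * a + a := by ring
    omega

lemma inv_dpt (hΩ : OmegaCond K N a b L τ) (hK : 0 < K) (hN : 0 < N)
    (hm : 0 < a * N - b * K) : IsDPT K N a b (sigmaOf K N a b L τ) := by
  obtain ⟨hLP, hle, hne, ⟨hbij, hhor, hver⟩, hext, hzero⟩ := hΩ
  have hτb : ∀ {x y t : ℤ},
      (L (y + t * b) + t * a ≤ x ∧ x < L (y + (t + 1) * b) + (t + 1) * a) →
      1 ≤ τ (x - t * a + ((y + t * b) / N) * K, (y + t * b) % N) ∧
      τ (x - t * a + ((y + t * b) / N) * K, (y + t * b) % N) ≤ a * N - b * K := by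
    intro x y t hb
    exact Set.mem_Icc.1 (hbij.1 (cell_mem hLP hN hb))
  refine ⟨?_, ?_, ?_, ?_, ?_⟩
  · -- surjective
    intro v
    set r := (v - 1) % (a * N - b * K) + 1 with hrdef
    set t := (v - 1) / (a * N - b * K) with htdef
    have hid := Int.mul_ediv_add_emod (v - 1) (a * N - b * K)
    have hr1 : 1 ≤ r := by
      have := Int.emod_nonneg (v - 1) (show a * N - b * K ≠ 0 by omega)
      omega
    have hr2 : r ≤ a * N - b * K := by
      have := Int.emod_lt_of_pos (v - 1) hm
      omega
    have hv : t * (a * N - b * K) + r = v := by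
      have e : (a * N - b * K) * ((v - 1) / (a * N - b * K)) = t * (a * N - b * K) := by
        rw [htdef]; ring
      omega
    obtain ⟨p, hp, hτp⟩ := hbij.2.2 (Set.mem_Icc.2 ⟨hr1, hr2⟩)
    obtain ⟨⟨hp1, hp2⟩, hp3, hp4⟩ := hp
    refine ⟨(p.1 + t * a, p.2 - t * b), ?_⟩
    have hb : L ((p.2 - t * b) + t * b) + t * a ≤ p.1 + t * a ∧
        p.1 + t * a < L ((p.2 - t * b) + (t + 1) * b) + (t + 1) * a := by
      constructor
      · have e : (p.2 - t * b) + t * b = p.2 := by ring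
        rw [e]; omega
      · have e : (p.2 - t * b) + (t + 1) * b = p.2 + b := by ring
        rw [e]
        simp only [LPshift] at hp2
        have e2 : (t + 1) * a = t * a + a := by ring
        omega
    rw [sigmaOf_eq hLP hle hK hN hm hb]
    have ez : (p.2 - t * b) + t * b = p.2 := by ring
    rw [ez]
    have hq : p.2 / N = 0 := Int.ediv_eq_zero_of_lt hp3 hp4
    have hr : p.2 % N = p.2 := Int.emod_eq_of_lt hp3 hp4
    rw [hq, hr]
    have ec : p.1 + t * a - t * a + 0 * K = p.1 := by ring
    rw [ec]
    have : (p.1, p.2) = p := rfl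
    rw [this, hτp]
    omega
  · -- periodicity A
    intro x y
    obtain ⟨t, hb, -⟩ := ex_uniq_t hLP hle hK hN hm x y
    have hL1 : L ((y - N) + t * b) = L (y + t * b) + K := by
      have e : (y - N) + t * b = (y + t * b) + (-1) * N := by ring
      rw [e, perL hLP (-1)]; ring
    have hL2 : L ((y - N) + (t + 1) * b) = L (y + (t + 1) * b) + K := by
      have e : (y - N) + (t + 1) * b = (y + (t + 1) * b) + (-1) * N := by ring
      rw [e, perL hLP (-1)]; ring
    have hb' : L ((y - N) + t * b) + t * a ≤ x + K ∧
        x + K < L ((y - N) + (t + 1) * b) + (t + 1) * a := by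
      rw [hL1, hL2]; omega
    rw [sigmaOf_eq hLP hle hK hN hm hb', sigmaOf_eq hLP hle hK hN hm hb]
    have e : (y - N) + t * b = (y + t * b) + (-1) * N := by ring
    have hq : ((y - N) + t * b) / N = (y + t * b) / N + (-1) := by
      rw [e]; exact Int.add_mul_ediv_right _ _ (by omega)
    have hr : ((y - N) + t * b) % N = (y + t * b) % N := by
      rw [e]; exact Int.add_mul_emod_self_right _ _ _
    rw [hq, hr]
    have ec : x + K - t * a + ((y + t * b) / N + (-1)) * K = x - t * a + ((y + t * b) / N) * K := by
      ring
    rw [ec]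
  · -- periodicity B
    intro x y
    obtain ⟨t, hb, -⟩ := ex_uniq_t hLP hle hK hN hm x y
    have e1 : (y - b) + (t + 1) * b = y + t * b := by ring
    have e2 : (y - b) + ((t + 1) + 1) * b = y + (t + 1) * b := by ring
    have hb' : L ((y - b) + (t + 1) * b) + (t + 1) * a ≤ x + a ∧
        x + a < L ((y - b) + ((t + 1) + 1) * b) + ((t + 1) + 1) * a := by
      rw [e1, e2]
      have e3 : (t + 1) * a = t * a + a := by ring
      have e4 : ((t + 1) + 1) * a = (t + 1) * a + a := by ring
      omega
    rw [sigmaOf_eq hLP hle hK hN hm hb', sigmaOf_eq hLP hle hK hN hm hb]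
    rw [e1]
    have ec : x + a - (t + 1) * a + ((y + t * b) / N) * K
        = x - t * a + ((y + t * b) / N) * K := by ring
    rw [ec]
    ring
  · -- strict mono in x
    intro x y
    obtain ⟨t, hb, -⟩ := ex_uniq_t hLP hle hK hN hm x y
    obtain ⟨t', hb', -⟩ := ex_uniq_t hLP hle hK hN hm (x + 1) y
    have htt' : t ≤ t' := by
      by_contra hc
      push_neg at hc
      have h9 : L (y + (t' + 1) * b) + (t' + 1) * a ≤ L (y + t * b) + t * a :=
        gmono hle y (show (t' + 1 : ℤ) ≤ t by omega)
      omega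
    rcases htt'.eq_or_lt with heq | hlt
    · subst heq
      rw [sigmaOf_eq hLP hle hK hN hm hb', sigmaOf_eq hLP hle hK hN hm hb]
      have ec : x + 1 - t * a + ((y + t * b) / N) * K
          = (x - t * a + ((y + t * b) / N) * K) + 1 := by ring
      rw [ec]
      have hc' := cell_mem hLP hN hb'
      rw [ec] at hc'
      linarith [hhor _ _ (cell_mem hLP hN hb) hc']
    · rw [sigmaOf_eq hLP hle hK hN hm hb', sigmaOf_eq hLP hle hK hN hm hb]
      have h1 := hτb hb
      have h2 := hτb hb'
      have e : (t' - t - 1) * (a * N - b * K)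
          = t' * (a * N - b * K) - t * (a * N - b * K) - (a * N - b * K) := by ring
      have : 0 ≤ (t' - t - 1) * (a * N - b * K) := mul_nonneg (by omega) hm.le
      omega
  · -- strict mono in y
    intro x y
    obtain ⟨t, hb, -⟩ := ex_uniq_t hLP hle hK hN hm x y
    obtain ⟨t'', hb'', -⟩ := ex_uniq_t hLP hle hK hN hm x (y + 1)
    have htt'' : t ≤ t'' := by
      by_contra hc
      push_neg at hc
      have h9 : L ((y + 1) + (t'' + 1) * b) + (t'' + 1) * a ≤ L ((y + 1) + t * b) + t * a :=
        gmono hle (y + 1) (show (t'' + 1 : ℤ) ≤ t by omega)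
      have h10 : L ((y + 1) + t * b) ≤ L (y + t * b) := hLP.1 (by omega)
      omega
    rcases htt''.eq_or_lt with heq | hlt
    · subst heq
      rw [sigmaOf_eq hLP hle hK hN hm hb'', sigmaOf_eq hLP hle hK hN hm hb]
      have key := (hext (x - t * a + ((y + t * b) / N) * K) ((y + t * b) % N)
        (x - t * a + (((y + 1) + t * b) / N) * K) (((y + 1) + t * b) % N)
        (-((y + t * b) / N)) (-(((y + 1) + t * b) / N))
        (cell_mem hLP hN hb) (cell_mem hLP hN hb'')).2
      have hid1 := Int.mul_ediv_add_emod (y + t * b) N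
      have hid2 := Int.mul_ediv_add_emod ((y + 1) + t * b) N
      have ee1 : -((y + t * b) / N) * K = -(((y + t * b) / N) * K) := by ring
      have ee2 : -(((y + 1) + t * b) / N) * K = -((((y + 1) + t * b) / N) * K) := by ring
      have ee3 : -((y + t * b) / N) * N = -(N * ((y + t * b) / N)) := by ring
      have ee4 : -(((y + 1) + t * b) / N) * N = -(N * (((y + 1) + t * b) / N)) := by ring
      have := key ⟨by omega, by omega⟩
      omega
    · rw [sigmaOf_eq hLP hle hK hN hm hb'', sigmaOf_eq hLP hle hK hN hm hb]
      have h1 := hτb hb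
      have h2 := hτb hb''
      have e : (t'' - t - 1) * (a * N - b * K)
          = t'' * (a * N - b * K) - t * (a * N - b * K) - (a * N - b * K) := by ring
      have : 0 ≤ (t'' - t - 1) * (a * N - b * K) := mul_nonneg (by omega) hm.le
      omega

lemma glex (h : IsDPT K N a b σ) (t x y : ℤ) :
    dptPath σ (y + t * b) + t * a ≤ x ↔ 1 + t * (a * N - b * K) ≤ σ (x, y) := by
  have h1 := one_le_iff h (x - t * a) (y + t * b)
  have h2 := perB h t (x - t * a) (y + t * b)
  have e1 : x - t * a + t * a = x := by ring
  have e2 : y + t * b - t * b = y := by ring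
  rw [e1, e2] at h2
  omega

lemma left_inv_lem (h : IsDPT K N a b σ) (hK : 0 < K) (hN : 0 < N)
    (hm : 0 < a * N - b * K) (p : ℤ × ℤ) :
    sigmaOf K N a b (dptPath σ) (fwdTau N a b σ) p = σ p := by
  obtain ⟨x, y⟩ := p
  have hLP := dptPath_isLP h
  have hle := fun y => dptPath_le_shift h hm y
  set v := σ (x, y) with hvdef
  set t := (v - 1) / (a * N - b * K) with htdef
  have hid := Int.mul_ediv_add_emod (v - 1) (a * N - b * K)
  have hr0 : 0 ≤ (v - 1) % (a * N - b * K) := Int.emod_nonneg _ (by omega)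
  have hrm : (v - 1) % (a * N - b * K) < a * N - b * K := Int.emod_lt_of_pos _ hm
  have ee : (a * N - b * K) * ((v - 1) / (a * N - b * K)) = t * (a * N - b * K) := by
    rw [htdef]; ring
  have hlow : 1 + t * (a * N - b * K) ≤ v := by omega
  have hupp : v ≤ (t + 1) * (a * N - b * K) := by
    have e : (t + 1) * (a * N - b * K) = t * (a * N - b * K) + (a * N - b * K) := by ring
    omega
  have hb : dptPath σ (y + t * b) + t * a ≤ x ∧
      x < dptPath σ (y + (t + 1) * b) + (t + 1) * a := by
    constructor
    · exact (glex h t x y).2 hlow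
    · by_contra hc
      push_neg at hc
      have := (glex h (t + 1) x y).1 hc
      omega
  rw [sigmaOf_eq hLP hle hK hN hm hb]
  have hcell := cell_mem hLP hN hb
  rw [fwdTau_eq hcell]
  have hid2 := Int.mul_ediv_add_emod (y + t * b) N
  have hA := perA h ((y + t * b) / N) (x - t * a) (y + t * b)
  have hBv := perB h t (x - t * a) (y + t * b)
  have e1 : x - t * a + t * a = x := by ring
  have e2 : y + t * b - t * b = y := by ring
  rw [e1, e2] at hBv
  have er : (y + t * b) % N = (y + t * b) - ((y + t * b) / N) * N := by
    have ec : N * ((y + t * b) / N) = ((y + t * b) / N) * N := by ring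
    omega
  rw [er, hA]
  omega

lemma right_L (hΩ : OmegaCond K N a b L τ) (hK : 0 < K) (hN : 0 < N)
    (hm : 0 < a * N - b * K) : dptPath (sigmaOf K N a b L τ) = L := by
  obtain ⟨hLP, hle, hne, ⟨hbij, hhor, hver⟩, hext, hzero⟩ := hΩ
  have hΩ' : OmegaCond K N a b L τ := ⟨hLP, hle, hne, ⟨hbij, hhor, hver⟩, hext, hzero⟩
  have hσ' := inv_dpt hΩ' hK hN hm
  have hτb : ∀ {x y t : ℤ},
      (L (y + t * b) + t * a ≤ x ∧ x < L (y + (t + 1) * b) + (t + 1) * a) →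
      1 ≤ τ (x - t * a + ((y + t * b) / N) * K, (y + t * b) % N) ∧
      τ (x - t * a + ((y + t * b) / N) * K, (y + t * b) % N) ≤ a * N - b * K := by
    intro x y t hb
    exact Set.mem_Icc.1 (hbij.1 (cell_mem hLP hN hb))
  have hchar : ∀ x y : ℤ, 1 ≤ sigmaOf K N a b L τ (x, y) ↔ L y ≤ x := by
    intro x y
    obtain ⟨t, hb, -⟩ := ex_uniq_t hLP hle hK hN hm x y
    have hg0t : ∀ u : ℤ, 0 ≤ u → L y ≤ L (y + u * b) + u * a := by
      intro u hu
      have h9 : L (y + 0 * b) + 0 * a ≤ L (y + u * b) + u * a := gmono hle y hu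
      have e : y + 0 * b = y := by ring
      rw [e] at h9
      omega
    have hτ := hτb hb
    rw [sigmaOf_eq hLP hle hK hN hm hb]
    constructor
    · intro hv
      have ht0 : 0 ≤ t := by
        by_contra hc
        push_neg at hc
        have e : (t + 1) * (a * N - b * K) = t * (a * N - b * K) + (a * N - b * K) := by ring
        have : 0 ≤ (-(t+1)) * (a * N - b * K) := mul_nonneg (by omega) hm.le
        have e2 : (-(t+1)) * (a * N - b * K) = -(t * (a * N - b * K)) - (a * N - b * K) := by
          ring
        omega
      exact (hg0t t ht0).trans hb.1
    · intro hLy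
      have ht0 : 0 ≤ t := by
        by_contra hc
        push_neg at hc
        have h9 : L (y + (t + 1) * b) + (t + 1) * a ≤ L (y + 0 * b) + 0 * a :=
          gmono hle y (by omega)
        have e : y + 0 * b = y := by ring
        rw [e] at h9
        omega
      have : 0 ≤ t * (a * N - b * K) := mul_nonneg ht0 hm.le
      omega
  funext y
  have hspec := dptPath_spec hσ' y
  apply le_antisymm
  · exact hspec.2 (L y) ((hchar (L y) y).2 le_rfl)
  · exact (hchar _ y).1 hspec.1

lemma right_tau (hΩ : OmegaCond K N a b L τ) (hK : 0 < K) (hN : 0 < N)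
    (hm : 0 < a * N - b * K) : fwdTau N a b (sigmaOf K N a b L τ) = τ := by
  have hL := right_L hΩ hK hN hm
  obtain ⟨hLP, hle, hne, ⟨hbij, hhor, hver⟩, hext, hzero⟩ := hΩ
  funext p
  rw [fwdTau_def, hL]
  by_cases hp : p ∈ Delta N a b L
  · rw [if_pos hp]
    obtain ⟨x, y⟩ := p
    obtain ⟨⟨hp1, hp2⟩, hp3, hp4⟩ := hp
    simp only [LPshift] at hp2
    have hb : L (y + 0 * b) + 0 * a ≤ x ∧ x < L (y + (0 + 1) * b) + (0 + 1) * a := by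
      constructor
      · have e : y + 0 * b = y := by ring
        rw [e]; simpa using hp1
      · have e : y + (0 + 1) * b = y + b := by ring
        rw [e]; simpa using hp2
    rw [sigmaOf_eq hLP hle hK hN hm hb]
    have e : y + 0 * b = y := by ring
    rw [e]
    have hq : y / N = 0 := Int.ediv_eq_zero_of_lt hp3 hp4
    have hr : y % N = y := Int.emod_eq_of_lt hp3 hp4
    rw [hq, hr]
    have ec : x - 0 * a + 0 * K = x := by ring
    rw [ec]
    ring
  · rw [if_neg hp]
    exact (hzero p hp).symm

lemma dpt_empty (hm : 0 < a * N - b * K) (hdeg : ¬ (0 < K ∧ 0 < N)) :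
    ¬ IsDPT K N a b σ := by
  intro h
  have hA := h.2.1
  -- case analysis on signs
  rcases le_or_gt K 0 with hK0 | hK0
  · rcases le_or_gt N 0 with hN0 | hN0
    · -- K ≤ 0, N ≤ 0
      rcases eq_or_lt_of_le hK0 with hKe | hKn
      · -- K = 0
        rcases eq_or_lt_of_le hN0 with hNe | hNn
        · -- K = 0, N = 0
          subst hKe
          subst hNe
          omega
        · -- K = 0, N < 0 : σ(0, -N) = σ(0,0) but σ(0,-N) > σ(0,0)
          have h1 := hA 0 0
          have h2 : σ (0, 0) < σ (0 + K, 0 - N) := by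
            calc σ (0, 0) < σ (0, 0 + 1) := h.2.2.2.2 0 0
              _ ≤ σ (0 + K, 0 - N) := mono2 h (by omega) (by omega)
          omega
      · -- K < 0, N ≤ 0 : split again
        rcases eq_or_lt_of_le hN0 with hNe | hNn
        · -- K < 0, N = 0 : σ(K, 0) < σ(0,0)
          have h1 := hA 0 0
          have h2 : σ (0 + K, 0 - N) < σ (0, 0) := by
            calc σ (0 + K, 0 - N) ≤ σ (0 - 1, 0) := mono2 h (by omega) (by omega)
              _ ≤ σ (0 - 1, 0 + 0) := by norm_num
              _ < σ (0, 0) := by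
                  have := h.2.2.2.1 (0 - 1) 0
                  norm_num at this ⊢
                  exact this
          omega
        · -- K < 0, N < 0 : the lattice trick
          have hB := perB h (K * N) 0 0
          have hper := perA h (-N * a) (0 + K * N * a) (0 - K * N * b)
          have e1 : 0 + K * N * a + -N * a * K = 0 := by ring
          have e2 : 0 - K * N * b - -N * a * N = 0 + N * (a * N - b * K) := by ring
          rw [e1, e2] at hper
          rw [← hper] at hB
          -- hB : σ (0, 0 + N * (a*N - b*K)) = σ (0, 0) + K * N * (a*N - b*K)
          have hlt : σ (0, 0 + N * (a * N - b * K)) < σ (0, 0) := by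
            have : 0 + N * (a * N - b * K) ≤ 0 - 1 := by nlinarith
            calc σ (0, 0 + N * (a * N - b * K)) ≤ σ (0, 0 - 1) := mono2 h le_rfl this
              _ < σ (0, 0 - 1 + 1) := h.2.2.2.2 0 (0 - 1)
              _ = σ (0, 0) := by norm_num
          have hgt : 0 < K * N * (a * N - b * K) :=
            mul_pos (mul_pos_of_neg_of_neg hKn hNn) hm
          omega
    · -- K ≤ 0, N > 0 : σ(K, -N) ≤ σ(0,-1) < σ(0,0)
      have h1 := hA 0 0
      have h2 : σ (0 + K, 0 - N) < σ (0, 0) := by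
        calc σ (0 + K, 0 - N) ≤ σ (0, 0 - 1) := mono2 h (by omega) (by omega)
          _ < σ (0, 0 - 1 + 1) := h.2.2.2.2 0 (0 - 1)
          _ = σ (0, 0) := by norm_num
      omega
  · rcases le_or_gt N 0 with hN0 | hN0
    · -- K > 0, N ≤ 0 : σ(K, -N) ≥ σ(1,0) > σ(0,0)
      have h1 := hA 0 0
      have h2 : σ (0, 0) < σ (0 + K, 0 - N) := by
        calc σ (0, 0) < σ (0 + 1, 0) := h.2.2.2.1 0 0
          _ ≤ σ (0 + K, 0 - N) := mono2 h (by omega) (by omega)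
      omega
    · exact hdeg ⟨hK0, hN0⟩

lemma omega_empty (hm : 0 < a * N - b * K) (hdeg : ¬ (0 < K ∧ 0 < N)) :
    ¬ OmegaCond K N a b L τ := by
  rintro ⟨hLP, hle, hne, ⟨hbij, hhor, hver⟩, hext, hzero⟩
  obtain ⟨p, hp, hτp⟩ := hbij.2.2 (Set.mem_Icc.2 ⟨le_rfl, by omega⟩ :
    (1 : ℤ) ∈ Set.Icc 1 (a * N - b * K))
  rcases le_or_gt N 0 with hN0 | hN0
  · -- Delta is empty
    obtain ⟨-, hp3, hp4⟩ := hp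
    omega
  · rcases lt_trichotomy K 0 with hK0 | hK0 | hK0
    · -- K < 0 contradicts antitone
      have h1 := hLP.1 (show (0:ℤ) ≤ 0 + N by omega)
      have h2 := hLP.2 0
      omega
    · -- K = 0 : L is constant, wrap-around contradiction
      subst hK0
      have hconst : ∀ u v : ℤ, L u = L v := by
        have key : ∀ u v : ℤ, u ≤ v → L v ≤ L u ∧ L u ≤ L v := by
          intro u v huv
          refine ⟨hLP.1 huv, ?_⟩
          have h1 := perL hLP (v - u) u
          have h2 : v ≤ u + (v - u) * N := by nlinarith
          have h3 := hLP.1 h2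
          omega
        intro u v
        rcases le_total u v with huv | huv
        · exact le_antisymm ((key u v huv).2) ((key u v huv).1)
        · exact le_antisymm ((key v u huv).1) ((key v u huv).2)
      obtain ⟨x, yp⟩ := p
      obtain ⟨⟨hp1, hp2⟩, hp3, hp4⟩ := hp
      simp only [LPshift] at hp2
      have hmem : ∀ z : ℤ, (x, z % N) ∈ Delta N a b L := by
        intro z
        refine ⟨⟨?_, ?_⟩, Int.emod_nonneg z (by omega), Int.emod_lt_of_pos z hN0⟩
        · simp only
          rw [hconst (z % N) yp]
          exact hp1
        · simp only [LPshift]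
          rw [hconst (z % N + b) (yp + b)]
          exact hp2
      have hsm : StrictMono (fun z : ℤ => τ (x, z % N)) := by
        apply strictMono_int_of_lt_succ
        intro z
        have key := (hext x (z % N) x ((z + 1) % N) (-(z / N)) (-((z + 1) / N))
          (hmem z) (hmem (z + 1))).2
        apply key
        constructor
        · ring
        · have hid1 := Int.mul_ediv_add_emod z N
          have hid2 := Int.mul_ediv_add_emod (z + 1) N
          have e1 : -(z / N) * N = -(N * (z / N)) := by ring
          have e2 : -((z + 1) / N) * N = -(N * ((z + 1) / N)) := by ring
          omega
      have hNN : N % N = 0 % N := by simp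
      have := hsm (show (0:ℤ) < N by omega)
      simp only [hNN] at this
      omega
    · exact absurd ⟨hK0, hN0⟩ hdeg

end Proof

/-- The map `σ ↦ (𝓛(σ), σ|_{Δ(σ)})` is a bijection from `DPT(K,N,a,b)` onto
`Ω(K,N,a,b)`: there is an equivalence `F` such that for every `σ`, the first
component of `F σ` is the lattice path of `σ` (its value at `y` is the least `x`
with `σ(x,y) ≥ 1`) and the second component agrees with `σ` on `Δ`. -/
theorem dpt_omega_bijection (K N a b : ℤ) (hm : 0 < a * N - b * K) :
    ∃ F : {σ : ℤ × ℤ → ℤ // IsDPT K N a b σ} ≃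
          {p : (ℤ → ℤ) × (ℤ × ℤ → ℤ) // OmegaCond K N a b p.1 p.2},
      ∀ σ : {σ : ℤ × ℤ → ℤ // IsDPT K N a b σ},
        (∀ y : ℤ, IsLeast {x : ℤ | 1 ≤ σ.1 (x, y)} ((F σ).1.1 y)) ∧
        (∀ p ∈ Delta N a b (F σ).1.1, (F σ).1.2 p = σ.1 p) := by
  by_cases hdeg : 0 < K ∧ 0 < N
  · obtain ⟨hK, hN⟩ := hdeg
    refine ⟨⟨fun s => ⟨(dptPath s.1, fwdTau N a b s.1), fwd_omega s.2 hK hN hm⟩,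
            fun p => ⟨sigmaOf K N a b p.1.1 p.1.2, inv_dpt p.2 hK hN hm⟩,
            ?_, ?_⟩, ?_⟩
    · intro s
      apply Subtype.ext
      funext p
      exact left_inv_lem s.2 hK hN hm p
    · intro p
      apply Subtype.ext
      exact Prod.ext (right_L p.2 hK hN hm) (right_tau p.2 hK hN hm)
    · intro s
      constructor
      · intro y
        exact ⟨(dptPath_spec s.2 y).1, fun z hz => (dptPath_spec s.2 y).2 z hz⟩
      · intro p hp
        exact fwdTau_eq hp
  · have hedpt : IsEmpty {σ : ℤ × ℤ → ℤ // IsDPT K N a b σ} :=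
      ⟨fun s => dpt_empty hm hdeg s.2⟩
    have heom : IsEmpty {p : (ℤ → ℤ) × (ℤ × ℤ → ℤ) // OmegaCond K N a b p.1 p.2} :=
      ⟨fun p => omega_empty hm hdeg p.2⟩
    exact ⟨Equiv.equivOfIsEmpty _ _, fun s => isEmptyElim s⟩
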